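/- Let n ≥ 1 and a_1,…,a_n ∈ ℝ with a_i ≠ 0 for every i. Let S := {s ∈ {−1,+1}^n : ∏_{i=1}^n s_i = +1} and L_s := Σ_{i=1}^n s_i a_i. Suppose ∏_{i=1}^n sign(a_i) = −1, where sign(a_i) = +1 if a_i > 0 and −1 if a_i < 0. Then max_{s∈S} L_s = Σ_{i=1}^n |a_i| − 2 min_{1≤i≤n} |a_i|, and the number of maximizers #{s ∈ S : L_s = max_{s'∈S} L_{s'}} equals #{j : |a_j| = min_{1≤i≤n} |a_i|}. -/

import Mathlib

open Finset
open scoped Classical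

/-- Auxiliary: a Boolean different from `y` equals `!y`. -/
lemma bool_eq_not_of_ne {x y : Bool} (h : x ≠ y) : x = !y := by
  cases x <;> cases y <;> simp_all

/-- Sign vector associated to a Boolean vector: `true ↦ +1`, `false ↦ -1`. -/
noncomputable def signVec {n : ℕ} (s : Fin n → Bool) : Fin n → ℝ :=
  fun i => if s i then 1 else -1

/-- The admissible sign patterns: sign vectors whose product of coordinates is `+1`. -/
noncomputable def admissible (n : ℕ) : Finset (Fin n → Bool) :=
  Finset.univ.filter (fun s => ∏ i, signVec s i = 1)

/-- If all `a_i ≠ 0` and the product of their signs is `-1`, then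
`max_{s ∈ S} L_s = Σ |a_i| - 2 min_i |a_i|`, and the number of maximizers equals the number
of indices attaining `min_i |a_i|`. -/
theorem max_signed_sum_negative_sign_product (n : ℕ) (hn : 1 ≤ n) (a : Fin n → ℝ)
    (ha : ∀ i, a i ≠ 0)
    (hsign : ∏ i, (if 0 < a i then (1 : ℝ) else -1) = -1)
    (m : ℝ) (hm : IsLeast (Set.range fun i => |a i|) m) :
    IsGreatest ((admissible n).image (fun s => ∑ i, signVec s i * a i) : Set ℝ)
      (∑ i, |a i| - 2 * m)
    ∧ ((admissible n).filter
          (fun s => ∑ i, signVec s i * a i = ∑ i, |a i| - 2 * m)).card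
        = (Finset.univ.filter (fun j => |a j| = m)).card := by
  classical
  set t : Fin n → Bool := fun i => if 0 < a i then true else false with ht
  set D : (Fin n → Bool) → Finset (Fin n) :=
    fun s => univ.filter (fun i => s i ≠ t i) with hD
  -- per-term identity
  have hterm : ∀ (s : Fin n → Bool) (i : Fin n),
      signVec s i * a i = |a i| - (if s i ≠ t i then 2 * |a i| else 0) := by
    intro s i
    rcases (ha i).lt_or_gt with h | h
    · have habs : |a i| = -a i := abs_of_neg h
      have hti : t i = false := by simp [ht, not_lt.mpr h.le]
      cases hsi : s i <;> simp [signVec, hsi, hti, habs] <;> ring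
    · have habs : |a i| = a i := abs_of_pos h
      have hti : t i = true := by simp [ht, h]
      cases hsi : s i <;> simp [signVec, hsi, hti, habs] <;> ring
  -- sum identity
  have hsum : ∀ s : Fin n → Bool,
      ∑ i, signVec s i * a i = ∑ i, |a i| - 2 * ∑ i ∈ D s, |a i| := by
    intro s
    calc ∑ i, signVec s i * a i
        = ∑ i, (|a i| - (if s i ≠ t i then 2 * |a i| else 0)) :=
          Finset.sum_congr rfl fun i _ => hterm s i
      _ = ∑ i, |a i| - ∑ i, (if s i ≠ t i then 2 * |a i| else 0) :=
          Finset.sum_sub_distrib _ _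
      _ = ∑ i, |a i| - 2 * ∑ i ∈ D s, |a i| := by
          congr 1
          rw [Finset.mul_sum, Finset.sum_filter]
  -- product of canonical signs
  have hprodt : ∏ i, signVec t i = -1 := by
    rw [← hsign]
    refine Finset.prod_congr rfl fun i _ => ?_
    by_cases h : 0 < a i <;> simp [signVec, ht, h]
  have hfactor : ∀ (s : Fin n → Bool) (i : Fin n),
      signVec s i = (if s i ≠ t i then (-1 : ℝ) else 1) * signVec t i := by
    intro s i
    by_cases h : s i = t i
    · simp [signVec, h]
    · have h2 : s i = !t i := bool_eq_not_of_ne h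
      cases hti : t i <;> rw [hti] at h2 <;>
        simp [signVec, h2, hti, h]
  -- admissibility criterion
  have hadm : ∀ s : Fin n → Bool, s ∈ admissible n ↔ Odd (D s).card := by
    intro s
    have hps : ∏ i, signVec s i = (-1 : ℝ) ^ (D s).card * -1 := by
      calc ∏ i, signVec s i
          = ∏ i, ((if s i ≠ t i then (-1 : ℝ) else 1) * signVec t i) :=
            Finset.prod_congr rfl fun i _ => hfactor s i
        _ = (∏ i, (if s i ≠ t i then (-1 : ℝ) else 1)) * ∏ i, signVec t i :=
            Finset.prod_mul_distrib
        _ = (-1 : ℝ) ^ (D s).card * -1 := by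
            rw [hprodt]
            congr 1
            rw [Finset.prod_ite, Finset.prod_const, Finset.prod_const, one_pow, mul_one]
    simp only [admissible, mem_filter, mem_univ, true_and, hps]
    constructor
    · intro h
      rcases Nat.even_or_odd (D s).card with he | ho
      · exfalso
        rw [he.neg_one_pow] at h
        norm_num at h
      · exact ho
    · intro h
      rw [h.neg_one_pow]
      ring
  -- facts about m
  obtain ⟨j0, hj0⟩ := hm.1
  have hmle : ∀ i, m ≤ |a i| := fun i => hm.2 ⟨i, rfl⟩
  have hmpos : 0 < m := hj0 ▸ abs_pos.mpr (ha j0)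
  -- lower bound on disagreement sums
  have hDsum : ∀ s ∈ admissible n, m ≤ ∑ i ∈ D s, |a i| := by
    intro s hs
    obtain ⟨i, hi⟩ := Finset.card_pos.mp ((hadm s).mp hs).pos
    calc m ≤ |a i| := hmle i
      _ ≤ ∑ i ∈ D s, |a i| :=
        Finset.single_le_sum (f := fun i => |a i|) (fun _ _ => abs_nonneg _) hi
  -- the flip construction
  have hDupdate : ∀ j : Fin n, D (Function.update t j (!t j)) = {j} := by
    intro j
    ext i
    simp only [hD, mem_filter, mem_univ, true_and, mem_singleton]
    rcases eq_or_ne i j with rfl | h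
    · simp [Function.update_self]
    · simp [Function.update_of_ne h, h]
  have hflip_adm : ∀ j : Fin n, Function.update t j (!t j) ∈ admissible n := by
    intro j
    rw [hadm, hDupdate]
    simp
  have hflip_val : ∀ j : Fin n, |a j| = m →
      ∑ i, signVec (Function.update t j (!t j)) i * a i = ∑ i, |a i| - 2 * m := by
    intro j hj
    rw [hsum, hDupdate, Finset.sum_singleton, hj]
  -- maximizers are flips at minimizing indices
  have key : ∀ s ∈ admissible n,
      ∑ i, signVec s i * a i = ∑ i, |a i| - 2 * m →
      ∃ j, |a j| = m ∧ s = Function.update t j (!t j) := by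
    intro s hs hval
    have h1 : ∑ i ∈ D s, |a i| = m := by
      have h2 := hsum s
      rw [hval] at h2
      linarith
    have hcard : (D s).card = 1 := by
      by_contra hne
      have hodd := (hadm s).mp hs
      have h2 : 2 ≤ (D s).card := by
        rcases hodd with ⟨k, hk⟩; omega
      obtain ⟨i, k, hi, hk, hik⟩ := Finset.one_lt_card_iff.mp h2
      have hsub : ({i, k} : Finset (Fin n)) ⊆ D s := by
        intro x hx
        rcases Finset.mem_insert.mp hx with rfl | hx
        · exact hi
        · rw [Finset.mem_singleton] at hx; subst hx; exact hk
      have h3 : |a i| + |a k| ≤ ∑ x ∈ D s, |a x| := by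
        rw [← Finset.sum_pair (f := fun x => |a x|) hik]
        exact Finset.sum_le_sum_of_subset_of_nonneg hsub fun _ _ _ => abs_nonneg _
      have h4 := hmle i
      have h5 := hmle k
      linarith
    obtain ⟨j, hj⟩ := Finset.card_eq_one.mp hcard
    refine ⟨j, ?_, ?_⟩
    · rw [hj, Finset.sum_singleton] at h1; exact h1
    · funext i
      rcases eq_or_ne i j with rfl | h
      · have hmem : i ∈ D s := by rw [hj]; exact Finset.mem_singleton_self i
        have hne2 : s i ≠ t i := by
          simpa [hD] using hmem
        rw [Function.update_self]
        exact bool_eq_not_of_ne hne2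
      · have hmem : i ∉ D s := by
          rw [hj, Finset.mem_singleton]; exact h
        have heq : s i = t i := by
          by_contra hne2
          exact hmem (by simp [hD, hne2])
        rw [Function.update_of_ne h, heq]
  constructor
  · constructor
    · rw [Finset.mem_coe, Finset.mem_image]
      exact ⟨Function.update t j0 (!t j0), hflip_adm j0, hflip_val j0 hj0⟩
    · rintro x hx
      rw [Finset.mem_coe, Finset.mem_image] at hx
      obtain ⟨s, hs, rfl⟩ := hx
      rw [hsum]
      have := hDsum s hs
      linarith
  · refine (Finset.card_bij (fun j _ => Function.update t j (!t j)) ?_ ?_ ?_).symm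
    · intro j hj
      rw [Finset.mem_filter] at hj ⊢
      exact ⟨hflip_adm j, hflip_val j hj.2⟩
    · intro j1 h1 j2 h2 heq
      by_contra hne
      have h3 := congrFun heq j1
      simp only [Function.update_self, Function.update_of_ne hne] at h3
      exact (Bool.not_ne_self (t j1)) h3
    · intro s hs
      rw [Finset.mem_filter] at hs
      obtain ⟨j, hjm, hjs⟩ := key s hs.1 hs.2
      exact ⟨j, Finset.mem_filter.mpr ⟨Finset.mem_univ j, hjm⟩, hjs.symm⟩
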